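/- Let M₁ be the midpoint of O and B, and M₂ the midpoint of O and Γ. The area of the trapezoid O₁ O₂ M₂ M₁, i.e., the Lebesgue measure of the convex hull of {O₁, O₂, M₂, M₁}, equals α⁴ / (16βγ), where α = dist B Γ, β = dist A Γ, γ = dist A B. -/

import Mathlib

open EuclideanGeometry MeasureTheory Set Pointwise

noncomputable def pt (a b : ℝ) : EuclideanSpace ℝ (Fin 2) :=
  (WithLp.equiv 2 (Fin 2 → ℝ)).symm ![a,b]

@[simp] lemma pt_0 (a b : ℝ) : pt a b 0 = a := rfl
@[simp] lemma pt_1 (a b : ℝ) : pt a b 1 = b := rfl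

lemma vol_std (r : ℝ) (hr : 0 < r) :
    volume {q : ℝ × ℝ | (0 ≤ q.1 ∧ q.1 ≤ 1) ∧ (0 ≤ q.2 ∧ q.2 ≤ 1 + (r-1) * q.1)} =
      ENNReal.ofReal ((1+r)/2) := by
  set s : Set (ℝ × ℝ) := {q : ℝ × ℝ | (0 ≤ q.1 ∧ q.1 ≤ 1) ∧ (0 ≤ q.2 ∧ q.2 ≤ 1 + (r-1) * q.1)} with hs
  have hms : MeasurableSet s := by
    apply MeasurableSet.inter
    · exact ((measurableSet_le measurable_const measurable_fst).inter
        (measurableSet_le measurable_fst measurable_const))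
    · exact ((measurableSet_le measurable_const measurable_snd).inter
        (measurableSet_le measurable_snd (by fun_prop)))
  rw [Measure.volume_eq_prod, Measure.prod_apply hms]
  have hslice : ∀ x : ℝ, (Prod.mk x ⁻¹' s) =
      if x ∈ Icc (0:ℝ) 1 then Icc 0 (1 + (r-1)*x) else ∅ := by
    intro x
    split_ifs with hx
    · ext y; simp [hs, hx.1, hx.2, Set.mem_Icc]
    · ext y; simp only [Set.mem_Icc, Set.mem_preimage, hs, Set.mem_setOf_eq, Set.mem_empty_iff_false,
        iff_false]
      rintro ⟨⟨h1, h2⟩, -⟩; exact hx ⟨h1, h2⟩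
  have : ∀ x : ℝ, volume (Prod.mk x ⁻¹' s) =
      (Icc (0:ℝ) 1).indicator (fun x => ENNReal.ofReal (1 + (r-1)*x)) x := by
    intro x
    rw [hslice x, Set.indicator_apply]
    split_ifs with hx
    · rw [Real.volume_Icc]; norm_num
    · simp
  simp_rw [this]
  rw [lintegral_indicator measurableSet_Icc]
  have hint : ∫ x in Icc (0:ℝ) 1, (1 + (r-1)*x) = (1+r)/2 := by
    rw [integral_Icc_eq_integral_Ioc, ← intervalIntegral.integral_of_le zero_le_one]
    have : ∫ x in (0:ℝ)..1, (1 + (r-1)*x) = ((1:ℝ) + (r-1)/2*1^2) - ((0:ℝ) + (r-1)/2*0^2) := by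
      refine intervalIntegral.integral_eq_sub_of_hasDerivAt
        (f := fun x : ℝ => x + (r-1)/2*x^2) (fun x _ => ?_)
        ((continuous_const.add (continuous_const.mul continuous_id)).intervalIntegrable 0 1)
      have h1 : HasDerivAt (fun x : ℝ => x) 1 x := hasDerivAt_id x
      have h2 : HasDerivAt (fun x : ℝ => (r-1)/2*x^2) ((r-1)*x) x := by
        have := (hasDerivAt_pow 2 x).const_mul ((r-1)/2)
        refine this.congr_deriv ?_
        push_cast
        ring
      exact h1.add h2
    rw [this]; ring
  rw [← ofReal_integral_eq_lintegral_ofReal, hint]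
  · exact (continuous_const.add (continuous_const.mul continuous_id)).integrableOn_Icc
  · refine Filter.Eventually.mono (ae_restrict_mem measurableSet_Icc) fun x hx => ?_
    simp only [Pi.zero_apply]
    nlinarith [hx.1, hx.2]

lemma vol_T (r : ℝ) (hr : 0 < r) :
    volume {p : EuclideanSpace ℝ (Fin 2) | (0 ≤ p 0 ∧ p 0 ≤ 1) ∧ (0 ≤ p 1 ∧ p 1 ≤ 1 + (r-1) * p 0)} =
      ENNReal.ofReal ((1+r)/2) := by
  have hmp : MeasurePreserving
      ((MeasurableEquiv.finTwoArrow (α := ℝ)) ∘ (MeasurableEquiv.toLp 2 (Fin 2 → ℝ)).symm)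
      volume volume :=
    (volume_preserving_finTwoArrow ℝ).comp
      (EuclideanSpace.volume_preserving_symm_measurableEquiv_toLp (Fin 2))
  have hpre : {p : EuclideanSpace ℝ (Fin 2) | (0 ≤ p 0 ∧ p 0 ≤ 1) ∧ (0 ≤ p 1 ∧ p 1 ≤ 1 + (r-1) * p 0)} =
      ((MeasurableEquiv.finTwoArrow (α := ℝ)) ∘ (MeasurableEquiv.toLp 2 (Fin 2 → ℝ)).symm) ⁻¹'
      {q : ℝ × ℝ | (0 ≤ q.1 ∧ q.1 ≤ 1) ∧ (0 ≤ q.2 ∧ q.2 ≤ 1 + (r-1) * q.1)} := rfl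
  rw [hpre, hmp.measure_preimage]
  · exact vol_std r hr
  · apply MeasurableSet.nullMeasurableSet
    apply MeasurableSet.inter
    · exact ((measurableSet_le measurable_const measurable_fst).inter
        (measurableSet_le measurable_fst measurable_const))
    · exact ((measurableSet_le measurable_const measurable_snd).inter
        (measurableSet_le measurable_snd (by fun_prop)))

lemma hull_eq (r : ℝ) (hr : 0 < r) :
    convexHull ℝ ({pt 0 1, pt 1 r, pt 1 0, pt 0 0} : Set (EuclideanSpace ℝ (Fin 2))) =
      {p : EuclideanSpace ℝ (Fin 2) | (0 ≤ p 0 ∧ p 0 ≤ 1) ∧ (0 ≤ p 1 ∧ p 1 ≤ 1 + (r-1) * p 0)} := by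
  apply le_antisymm
  · apply convexHull_min
    · rintro p (rfl | rfl | rfl | rfl) <;>
        simp only [Set.mem_setOf_eq, pt_0, pt_1] <;>
        refine ⟨⟨by norm_num, by norm_num⟩, by nlinarith [hr.le], by nlinarith [hr.le]⟩
    · rintro x ⟨⟨hx1, hx2⟩, hx3, hx4⟩ y ⟨⟨hy1, hy2⟩, hy3, hy4⟩ a b ha hb hab
      simp only [Set.mem_setOf_eq, PiLp.add_apply, PiLp.smul_apply, smul_eq_mul]
      refine ⟨⟨by nlinarith, by nlinarith⟩, by nlinarith, by nlinarith⟩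
  · rintro p ⟨⟨hx0, hx1⟩, hy0, hy1⟩
    have hf : 0 < 1 + (r-1) * p 0 := by
      rcases lt_or_ge (p 0) 1 with h | h
      · nlinarith [mul_nonneg hx0 hr.le]
      · nlinarith [mul_nonneg hr.le (sub_nonneg.2 h)]
    set s := p 1 / (1 + (r-1) * p 0) with hsdef
    have hs0 : 0 ≤ s := div_nonneg hy0 hf.le
    have hs1 : s ≤ 1 := by rw [hsdef, div_le_one hf]; exact hy1
    have hmem : ∀ q ∈ ({pt 0 1, pt 1 r, pt 1 0, pt 0 0} : Set (EuclideanSpace ℝ (Fin 2))),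
        q ∈ convexHull ℝ ({pt 0 1, pt 1 r, pt 1 0, pt 0 0} : Set (EuclideanSpace ℝ (Fin 2))) :=
      fun q hq => subset_convexHull ℝ _ hq
    have h01 := hmem (pt 0 1) (by simp)
    have h1r := hmem (pt 1 r) (by simp)
    have h10 := hmem (pt 1 0) (by simp)
    have h00 := hmem (pt 0 0) (by simp)
    have hC := convex_convexHull ℝ ({pt 0 1, pt 1 r, pt 1 0, pt 0 0} : Set (EuclideanSpace ℝ (Fin 2)))
    have hq0 : (1 - p 0) • pt 0 0 + p 0 • pt 1 0 ∈
        convexHull ℝ ({pt 0 1, pt 1 r, pt 1 0, pt 0 0} : Set (EuclideanSpace ℝ (Fin 2))) :=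
      hC h00 h10 (by linarith) hx0 (by ring)
    have hq1 : (1 - p 0) • pt 0 1 + p 0 • pt 1 r ∈
        convexHull ℝ ({pt 0 1, pt 1 r, pt 1 0, pt 0 0} : Set (EuclideanSpace ℝ (Fin 2))) :=
      hC h01 h1r (by linarith) hx0 (by ring)
    have hfin := hC (a := 1 - s) (b := s) hq0 hq1 (by linarith) hs0 (by ring)
    have hpe : p = (1 - s) • ((1 - p 0) • pt 0 0 + p 0 • pt 1 0)
        + s • ((1 - p 0) • pt 0 1 + p 0 • pt 1 r) := by
      ext i
      fin_cases i
      · show p 0 = _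
        simp only [Fin.zero_eta, Fin.mk_one, PiLp.add_apply, PiLp.smul_apply, smul_eq_mul, pt_0]
        ring
      · show p 1 = _
        simp only [Fin.zero_eta, Fin.mk_one, PiLp.add_apply, PiLp.smul_apply, smul_eq_mul, pt_1]
        have key : s * (1 + (r-1) * p 0) = p 1 := by
          rw [hsdef]; exact div_mul_cancel₀ _ hf.ne'
        linear_combination -key
    rw [hpe]
    exact hfin

lemma quad_vol (M u v : EuclideanSpace ℝ (Fin 2)) (c : ℝ) (hc : 0 < c)
    (huv : inner ℝ u v = (0:ℝ)) :
    volume (convexHull ℝ ({M + v, M + u + c • v, M + u, M} : Set (EuclideanSpace ℝ (Fin 2)))) =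
      ENNReal.ofReal (((1+c)/2) * (‖u‖ * ‖v‖)) := by
  classical
  set b : Module.Basis (Fin 2) ℝ (EuclideanSpace ℝ (Fin 2)) := PiLp.basisFun 2 ℝ (Fin 2) with hb
  set L : EuclideanSpace ℝ (Fin 2) →ₗ[ℝ] EuclideanSpace ℝ (Fin 2) := b.constr ℝ ![u, v] with hLdef
  have hL : ∀ p : EuclideanSpace ℝ (Fin 2), L p = p 0 • u + p 1 • v := by
    intro p
    rw [hLdef, Module.Basis.constr_apply_fintype]
    simp [hb, Fin.sum_univ_two]
  set φ : EuclideanSpace ℝ (Fin 2) →ᵃ[ℝ] EuclideanSpace ℝ (Fin 2) :=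
    (AffineEquiv.constVAdd ℝ (EuclideanSpace ℝ (Fin 2)) M).toAffineMap.comp L.toAffineMap with hφ
  have hφapp : ∀ x, φ x = M + L x := fun x => rfl
  have hφcoe : ⇑φ = fun x => M + L x := funext hφapp
  have himgpts : (fun x => M + L x) '' ({pt 0 1, pt 1 c, pt 1 0, pt 0 0} : Set (EuclideanSpace ℝ (Fin 2))) =
      ({M + v, M + u + c • v, M + u, M} : Set (EuclideanSpace ℝ (Fin 2))) := by
    simp only [Set.image_insert_eq, Set.image_singleton, hL, pt_0, pt_1, one_smul, zero_smul,
      add_zero, zero_add]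
    rw [← add_assoc]
  have hhull : (convexHull ℝ ({M + v, M + u + c • v, M + u, M} : Set (EuclideanSpace ℝ (Fin 2)))) =
      (fun x => M + L x) '' (convexHull ℝ ({pt 0 1, pt 1 c, pt 1 0, pt 0 0} : Set (EuclideanSpace ℝ (Fin 2)))) := by
    rw [← hφcoe] at himgpts ⊢
    rw [AffineMap.image_convexHull, himgpts]
  rw [hhull]
  have hcomp : (fun x => M + L x) '' (convexHull ℝ ({pt 0 1, pt 1 c, pt 1 0, pt 0 0} : Set (EuclideanSpace ℝ (Fin 2))))
      = M +ᵥ (L '' (convexHull ℝ ({pt 0 1, pt 1 c, pt 1 0, pt 0 0} : Set (EuclideanSpace ℝ (Fin 2))))) := by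
    rw [← Set.image_vadd, ← Set.image_comp]
    rfl
  rw [hcomp, measure_vadd, Measure.addHaar_image_linearMap, hull_eq c hc, vol_T c hc]
  have hdet : LinearMap.det L = u 0 * v 1 - v 0 * u 1 := by
    rw [← LinearMap.det_toMatrix b, Matrix.det_fin_two]
    simp [LinearMap.toMatrix_apply, hLdef, Module.Basis.constr_basis, hb]
  have hinner : u 0 * v 0 + u 1 * v 1 = 0 := by
    have h := huv
    rw [PiLp.inner_apply, Fin.sum_univ_two] at h
    simpa [RCLike.inner_apply, conj_trivial, mul_comm] using h
  have habs : |LinearMap.det L| = ‖u‖ * ‖v‖ := by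
    rw [hdet]
    have h1 : ‖u‖ = Real.sqrt (u 0 ^ 2 + u 1 ^ 2) := by
      rw [EuclideanSpace.norm_eq, Fin.sum_univ_two]
      norm_num [sq_abs]
    have h2 : ‖v‖ = Real.sqrt (v 0 ^ 2 + v 1 ^ 2) := by
      rw [EuclideanSpace.norm_eq, Fin.sum_univ_two]
      norm_num [sq_abs]
    rw [h1, h2, ← Real.sqrt_mul (by positivity), ← Real.sqrt_sq_eq_abs]
    congr 1
    linear_combination (-(u 0 * v 0 + u 1 * v 1) - 0) * hinner
  rw [habs, ← ENNReal.ofReal_mul (by positivity)]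
  congr 1
  ring

lemma dist_sq (x y : EuclideanSpace ℝ (Fin 2)) :
    dist x y ^ 2 = (x 0 - y 0)^2 + (x 1 - y 1)^2 := by
  rw [EuclideanSpace.dist_eq, Real.sq_sqrt (by positivity)]
  simp [Fin.sum_univ_two, Real.dist_eq, sq_abs]

lemma norm_sq (x : EuclideanSpace ℝ (Fin 2)) : ‖x‖ ^ 2 = (x 0)^2 + (x 1)^2 := by
  rw [EuclideanSpace.norm_eq, Real.sq_sqrt (by positivity)]
  simp [Fin.sum_univ_two, sq_abs]

lemma eq_of_sq_eq {x y : ℝ} (hx : 0 ≤ x) (hy : 0 ≤ y) (h : x^2 = y^2) : x = y := by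
  rw [← Real.sqrt_sq hx, ← Real.sqrt_sq hy, h]

set_option maxHeartbeats 2000000 in
theorem area_trapezoid (A B Γ O O₁ O₂ : EuclideanSpace ℝ (Fin 2))
    (hAB : A ≠ B) (hAΓ : A ≠ Γ)
    (hright : inner ℝ (B - A) (Γ - A) = (0 : ℝ))
    (hO : O = midpoint ℝ B Γ)
    (h1 : dist O₁ A = dist O₁ O) (h1' : dist O₁ O = dist O₁ B)
    (h2 : dist O₂ A = dist O₂ O) (h2' : dist O₂ O = dist O₂ Γ)
    (M₁ M₂ : EuclideanSpace ℝ (Fin 2))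
    (hM₁ : M₁ = midpoint ℝ O B) (hM₂ : M₂ = midpoint ℝ O Γ) :
    (volume (convexHull ℝ ({O₁, O₂, M₂, M₁} : Set (EuclideanSpace ℝ (Fin 2))))).toReal =
      (dist B Γ) ^ 4 / (16 * dist A Γ * dist A B) := by
  have hO0 : O 0 = (B 0 + Γ 0)/2 := by
    rw [hO, midpoint_eq_smul_add, PiLp.smul_apply, PiLp.add_apply, smul_eq_mul, invOf_eq_inv]; ring
  have hO1 : O 1 = (B 1 + Γ 1)/2 := by
    rw [hO, midpoint_eq_smul_add, PiLp.smul_apply, PiLp.add_apply, smul_eq_mul, invOf_eq_inv]; ring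
  have hm10 : M₁ 0 = (3*B 0 + Γ 0)/4 := by
    rw [hM₁, midpoint_eq_smul_add, PiLp.smul_apply, PiLp.add_apply, smul_eq_mul, invOf_eq_inv, hO0]; ring
  have hm11 : M₁ 1 = (3*B 1 + Γ 1)/4 := by
    rw [hM₁, midpoint_eq_smul_add, PiLp.smul_apply, PiLp.add_apply, smul_eq_mul, invOf_eq_inv, hO1]; ring
  have hm20 : M₂ 0 = (B 0 + 3*Γ 0)/4 := by
    rw [hM₂, midpoint_eq_smul_add, PiLp.smul_apply, PiLp.add_apply, smul_eq_mul, invOf_eq_inv, hO0]; ring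
  have hm21 : M₂ 1 = (B 1 + 3*Γ 1)/4 := by
    rw [hM₂, midpoint_eq_smul_add, PiLp.smul_apply, PiLp.add_apply, smul_eq_mul, invOf_eq_inv, hO1]; ring
  have hk : (B 0 - A 0) * (Γ 0 - A 0) + (B 1 - A 1) * (Γ 1 - A 1) = 0 := by
    rw [PiLp.inner_apply, Fin.sum_univ_two] at hright
    simpa [RCLike.inner_apply, conj_trivial, PiLp.sub_apply, mul_comm] using hright
  have e1 : (O₁ 0 - A 0)^2 + (O₁ 1 - A 1)^2
      = (O₁ 0 - (B 0 + Γ 0)/2)^2 + (O₁ 1 - (B 1 + Γ 1)/2)^2 := by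
    have h := congrArg (fun t : ℝ => t^2) h1
    simp only [dist_sq] at h
    rw [hO0, hO1] at h
    exact h
  have e2 : (O₁ 0 - (B 0 + Γ 0)/2)^2 + (O₁ 1 - (B 1 + Γ 1)/2)^2
      = (O₁ 0 - B 0)^2 + (O₁ 1 - B 1)^2 := by
    have h := congrArg (fun t : ℝ => t^2) h1'
    simp only [dist_sq] at h
    rw [hO0, hO1] at h
    exact h
  have e3 : (O₂ 0 - A 0)^2 + (O₂ 1 - A 1)^2
      = (O₂ 0 - (B 0 + Γ 0)/2)^2 + (O₂ 1 - (B 1 + Γ 1)/2)^2 := by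
    have h := congrArg (fun t : ℝ => t^2) h2
    simp only [dist_sq] at h
    rw [hO0, hO1] at h
    exact h
  have e4 : (O₂ 0 - (B 0 + Γ 0)/2)^2 + (O₂ 1 - (B 1 + Γ 1)/2)^2
      = (O₂ 0 - Γ 0)^2 + (O₂ 1 - Γ 1)^2 := by
    have h := congrArg (fun t : ℝ => t^2) h2'
    simp only [dist_sq] at h
    rw [hO0, hO1] at h
    exact h
  have hsb : 0 < dist A B := dist_pos.2 hAB
  have hsg : 0 < dist A Γ := dist_pos.2 hAΓ
  have hnb : dist A B ^ 2 = ((B 0 - A 0)^2 + (B 1 - A 1)^2) := by rw [dist_sq]; ring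
  have hng : dist A Γ ^ 2 = ((Γ 0 - A 0)^2 + (Γ 1 - A 1)^2) := by rw [dist_sq]; ring
  have hna : dist B Γ ^ 2 = ((Γ 0 - B 0)^2 + (Γ 1 - B 1)^2) := by rw [dist_sq]; ring
  have hnbpos : (0:ℝ) < ((B 0 - A 0)^2 + (B 1 - A 1)^2) := by rw [← hnb]; positivity
  have hngpos : (0:ℝ) < ((Γ 0 - A 0)^2 + (Γ 1 - A 1)^2) := by rw [← hng]; positivity
  have hd2 : ((B 0 - A 0)*(Γ 1 - A 1) - (B 1 - A 1)*(Γ 0 - A 0))^2 = ((B 0 - A 0)^2 + (B 1 - A 1)^2) * ((Γ 0 - A 0)^2 + (Γ 1 - A 1)^2) := by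
    linear_combination (-((B 0 - A 0) * (Γ 0 - A 0) + (B 1 - A 1) * (Γ 1 - A 1))) * hk
  have hdne : ((B 0 - A 0)*(Γ 1 - A 1) - (B 1 - A 1)*(Γ 0 - A 0)) ≠ 0 := by
    intro h
    rw [h] at hd2
    nlinarith [hnbpos, hngpos]
  have h2dne : (2*((B 0 - A 0)*(Γ 1 - A 1) - (B 1 - A 1)*(Γ 0 - A 0))) ≠ 0 := mul_ne_zero two_ne_zero hdne
  have h4d2ne : (4*((B 0 - A 0)*(Γ 1 - A 1) - (B 1 - A 1)*(Γ 0 - A 0))^2) ≠ 0 := by positivity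
  have hv0 : 2*((B 0 - A 0)*(Γ 1 - A 1) - (B 1 - A 1)*(Γ 0 - A 0))*(O₁ 0 - M₁ 0) = ((-1/2)*(B 1)*(Γ 1)^2 + (1/2)*(B 1)^3 + (-1/2)*(B 0)*(Γ 0)*(Γ 1) + (1/2)*(B 0)*(B 1)*(Γ 0) + (-1/2)*(B 0)^2*(Γ 1) + (1/2)*(B 0)^2*(B 1) + (1/2)*(A 1)*(Γ 1)^2 + (1)*(A 1)*(B 1)*(Γ 1) + (-3/2)*(A 1)*(B 1)^2 + (-1)*(A 1)^2*(Γ 1) + (1)*(A 1)^2*(B 1) + (1/2)*(A 0)*(Γ 0)*(Γ 1) + (-1/2)*(A 0)*(B 1)*(Γ 0) + (3/2)*(A 0)*(B 0)*(Γ 1) + (-3/2)*(A 0)*(B 0)*(B 1) + (-1)*(A 0)^2*(Γ 1) + (1)*(A 0)^2*(B 1)) := by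
    linear_combination ((B 1 - A 1)+(Γ 1 - A 1))*e2 - ((B 1 - A 1)-(Γ 1 - A 1))*e1
      - 2*((B 0 - A 0)*(Γ 1 - A 1) - (B 1 - A 1)*(Γ 0 - A 0))*hm10
  have hv1 : 2*((B 0 - A 0)*(Γ 1 - A 1) - (B 1 - A 1)*(Γ 0 - A 0))*(O₁ 1 - M₁ 1) = ((1/2)*(B 1)*(Γ 0)*(Γ 1) + (1/2)*(B 1)^2*(Γ 0) + (1/2)*(B 0)*(Γ 0)^2 + (-1/2)*(B 0)*(B 1)*(Γ 1) + (-1/2)*(B 0)*(B 1)^2 + (-1/2)*(B 0)^3 + (-1/2)*(A 1)*(Γ 0)*(Γ 1) + (-3/2)*(A 1)*(B 1)*(Γ 0) + (1/2)*(A 1)*(B 0)*(Γ 1) + (3/2)*(A 1)*(B 0)*(B 1) + (1)*(A 1)^2*(Γ 0) + (-1)*(A 1)^2*(B 0) + (-1/2)*(A 0)*(Γ 0)^2 + (-1)*(A 0)*(B 0)*(Γ 0) + (3/2)*(A 0)*(B 0)^2 + (1)*(A 0)^2*(Γ 0) + (-1)*(A 0)^2*(B 0)) := by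
    linear_combination ((B 0 - A 0)-(Γ 0 - A 0))*e1 - ((B 0 - A 0)+(Γ 0 - A 0))*e2
      - 2*((B 0 - A 0)*(Γ 1 - A 1) - (B 1 - A 1)*(Γ 0 - A 0))*hm11
  have hw0 : (-2*((B 0 - A 0)*(Γ 1 - A 1) - (B 1 - A 1)*(Γ 0 - A 0)))*(O₂ 0 - M₂ 0) = ((1/2)*(Γ 1)^3 + (1/2)*(Γ 0)^2*(Γ 1) + (-1/2)*(B 1)*(Γ 0)^2 + (-1/2)*(B 1)^2*(Γ 1) + (1/2)*(B 0)*(Γ 0)*(Γ 1) + (-1/2)*(B 0)*(B 1)*(Γ 0) + (-3/2)*(A 1)*(Γ 1)^2 + (1)*(A 1)*(B 1)*(Γ 1) + (1/2)*(A 1)*(B 1)^2 + (1)*(A 1)^2*(Γ 1) + (-1)*(A 1)^2*(B 1) + (-3/2)*(A 0)*(Γ 0)*(Γ 1) + (3/2)*(A 0)*(B 1)*(Γ 0) + (-1/2)*(A 0)*(B 0)*(Γ 1) + (1/2)*(A 0)*(B 0)*(B 1) + (1)*(A 0)^2*(Γ 1) + (-1)*(A 0)^2*(B 1)) := by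
    linear_combination ((B 1 - A 1)+(Γ 1 - A 1))*e4 - ((Γ 1 - A 1)-(B 1 - A 1))*e3
      + 2*((B 0 - A 0)*(Γ 1 - A 1) - (B 1 - A 1)*(Γ 0 - A 0))*hm20
  have hw1 : (-2*((B 0 - A 0)*(Γ 1 - A 1) - (B 1 - A 1)*(Γ 0 - A 0)))*(O₂ 1 - M₂ 1) = ((-1/2)*(Γ 0)*(Γ 1)^2 + (-1/2)*(Γ 0)^3 + (-1/2)*(B 1)*(Γ 0)*(Γ 1) + (1/2)*(B 0)*(Γ 1)^2 + (1/2)*(B 0)*(B 1)*(Γ 1) + (1/2)*(B 0)^2*(Γ 0) + (3/2)*(A 1)*(Γ 0)*(Γ 1) + (1/2)*(A 1)*(B 1)*(Γ 0) + (-3/2)*(A 1)*(B 0)*(Γ 1) + (-1/2)*(A 1)*(B 0)*(B 1) + (-1)*(A 1)^2*(Γ 0) + (1)*(A 1)^2*(B 0) + (3/2)*(A 0)*(Γ 0)^2 + (-1)*(A 0)*(B 0)*(Γ 0) + (-1/2)*(A 0)*(B 0)^2 + (-1)*(A 0)^2*(Γ 0) + (1)*(A 0)^2*(B 0)) := by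
    linear_combination ((Γ 0 - A 0)-(B 0 - A 0))*e3 - ((B 0 - A 0)+(Γ 0 - A 0))*e4
      + 2*((B 0 - A 0)*(Γ 1 - A 1) - (B 1 - A 1)*(Γ 0 - A 0))*hm21
  have F1 : (Γ 0 - B 0)*(O₁ 0 - M₁ 0) + (Γ 1 - B 1)*(O₁ 1 - M₁ 1) = 0 := by
    have key : (2*((B 0 - A 0)*(Γ 1 - A 1) - (B 1 - A 1)*(Γ 0 - A 0))) * ((Γ 0 - B 0)*(O₁ 0 - M₁ 0) + (Γ 1 - B 1)*(O₁ 1 - M₁ 1))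
        = (2*((B 0 - A 0)*(Γ 1 - A 1) - (B 1 - A 1)*(Γ 0 - A 0))) * 0 := by
      linear_combination (Γ 0 - B 0)*hv0 + (Γ 1 - B 1)*hv1
    exact mul_left_cancel₀ h2dne key
  have F2a : ((Γ 0 - A 0)^2 + (Γ 1 - A 1)^2) * (O₁ 0 - M₁ 0) = ((B 0 - A 0)^2 + (B 1 - A 1)^2) * (O₂ 0 - M₂ 0) := by
    have key : (2*((B 0 - A 0)*(Γ 1 - A 1) - (B 1 - A 1)*(Γ 0 - A 0))) * (((Γ 0 - A 0)^2 + (Γ 1 - A 1)^2) * (O₁ 0 - M₁ 0))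
        = (2*((B 0 - A 0)*(Γ 1 - A 1) - (B 1 - A 1)*(Γ 0 - A 0))) * (((B 0 - A 0)^2 + (B 1 - A 1)^2) * (O₂ 0 - M₂ 0)) := by
      linear_combination ((Γ 0 - A 0)^2 + (Γ 1 - A 1)^2)*hv0 + ((B 0 - A 0)^2 + (B 1 - A 1)^2)*hw0 + ((-1/2)*(Γ 1)^3 + (-1/2)*(Γ 0)^2*(Γ 1) + (1/2)*(B 1)*(Γ 1)^2 + (1/2)*(B 1)*(Γ 0)^2 + (1/2)*(B 1)^2*(Γ 1) + (-1/2)*(B 1)^3 + (1/2)*(B 0)^2*(Γ 1) + (-1/2)*(B 0)^2*(B 1) + (1)*(A 1)*(Γ 1)^2 + (-2)*(A 1)*(B 1)*(Γ 1) + (1)*(A 1)*(B 1)^2 + (1)*(A 0)*(Γ 0)*(Γ 1) + (-1)*(A 0)*(B 1)*(Γ 0) + (-1)*(A 0)*(B 0)*(Γ 1) + (1)*(A 0)*(B 0)*(B 1))*hk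
    exact mul_left_cancel₀ h2dne key
  have F2b : ((Γ 0 - A 0)^2 + (Γ 1 - A 1)^2) * (O₁ 1 - M₁ 1) = ((B 0 - A 0)^2 + (B 1 - A 1)^2) * (O₂ 1 - M₂ 1) := by
    have key : (2*((B 0 - A 0)*(Γ 1 - A 1) - (B 1 - A 1)*(Γ 0 - A 0))) * (((Γ 0 - A 0)^2 + (Γ 1 - A 1)^2) * (O₁ 1 - M₁ 1))
        = (2*((B 0 - A 0)*(Γ 1 - A 1) - (B 1 - A 1)*(Γ 0 - A 0))) * (((B 0 - A 0)^2 + (B 1 - A 1)^2) * (O₂ 1 - M₂ 1)) := by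
      linear_combination ((Γ 0 - A 0)^2 + (Γ 1 - A 1)^2)*hv1 + ((B 0 - A 0)^2 + (B 1 - A 1)^2)*hw1 + ((1/2)*(Γ 0)*(Γ 1)^2 + (1/2)*(Γ 0)^3 + (-1/2)*(B 1)^2*(Γ 0) + (-1/2)*(B 0)*(Γ 1)^2 + (-1/2)*(B 0)*(Γ 0)^2 + (1/2)*(B 0)*(B 1)^2 + (-1/2)*(B 0)^2*(Γ 0) + (1/2)*(B 0)^3 + (-1)*(A 1)*(Γ 0)*(Γ 1) + (1)*(A 1)*(B 1)*(Γ 0) + (1)*(A 1)*(B 0)*(Γ 1) + (-1)*(A 1)*(B 0)*(B 1) + (-1)*(A 0)*(Γ 0)^2 + (2)*(A 0)*(B 0)*(Γ 0) + (-1)*(A 0)*(B 0)^2)*hk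
    exact mul_left_cancel₀ h2dne key
  have F3 : 16 * ((Γ 0 - A 0)^2 + (Γ 1 - A 1)^2) * ((O₁ 0 - M₁ 0)^2 + (O₁ 1 - M₁ 1)^2) = ((B 0 - A 0)^2 + (B 1 - A 1)^2) * ((Γ 0 - B 0)^2 + (Γ 1 - B 1)^2) := by
    have key : (4*((B 0 - A 0)*(Γ 1 - A 1) - (B 1 - A 1)*(Γ 0 - A 0))^2) * (16 * ((Γ 0 - A 0)^2 + (Γ 1 - A 1)^2) * ((O₁ 0 - M₁ 0)^2 + (O₁ 1 - M₁ 1)^2))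
        = (4*((B 0 - A 0)*(Γ 1 - A 1) - (B 1 - A 1)*(Γ 0 - A 0))^2) * (((B 0 - A 0)^2 + (B 1 - A 1)^2) * ((Γ 0 - B 0)^2 + (Γ 1 - B 1)^2)) := by
      linear_combination 16*((Γ 0 - A 0)^2 + (Γ 1 - A 1)^2)*((2*((B 0 - A 0)*(Γ 1 - A 1) - (B 1 - A 1)*(Γ 0 - A 0))*(O₁ 0 - M₁ 0) + ((-1/2)*(B 1)*(Γ 1)^2 + (1/2)*(B 1)^3 + (-1/2)*(B 0)*(Γ 0)*(Γ 1) + (1/2)*(B 0)*(B 1)*(Γ 0) + (-1/2)*(B 0)^2*(Γ 1) + (1/2)*(B 0)^2*(B 1) + (1/2)*(A 1)*(Γ 1)^2 + (1)*(A 1)*(B 1)*(Γ 1) + (-3/2)*(A 1)*(B 1)^2 + (-1)*(A 1)^2*(Γ 1) + (1)*(A 1)^2*(B 1) + (1/2)*(A 0)*(Γ 0)*(Γ 1) + (-1/2)*(A 0)*(B 1)*(Γ 0) + (3/2)*(A 0)*(B 0)*(Γ 1) + (-3/2)*(A 0)*(B 0)*(B 1) + (-1)*(A 0)^2*(Γ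 1) + (1)*(A 0)^2*(B 1)))*hv0
        + (2*((B 0 - A 0)*(Γ 1 - A 1) - (B 1 - A 1)*(Γ 0 - A 0))*(O₁ 1 - M₁ 1) + ((1/2)*(B 1)*(Γ 0)*(Γ 1) + (1/2)*(B 1)^2*(Γ 0) + (1/2)*(B 0)*(Γ 0)^2 + (-1/2)*(B 0)*(B 1)*(Γ 1) + (-1/2)*(B 0)*(B 1)^2 + (-1/2)*(B 0)^3 + (-1/2)*(A 1)*(Γ 0)*(Γ 1) + (-3/2)*(A 1)*(B 1)*(Γ 0) + (1/2)*(A 1)*(B 0)*(Γ 1) + (3/2)*(A 1)*(B 0)*(B 1) + (1)*(A 1)^2*(Γ 0) + (-1)*(A 1)^2*(B 0) + (-1/2)*(A 0)*(Γ 0)^2 + (-1)*(A 0)*(B 0)*(Γ 0) + (3/2)*(A 0)*(B 0)^2 + (1)*(A 0)^2*(Γ 0) + (-1)*(A 0)^2*(B 0)))*hv1) + ((4)*(B 1)*(Γ 1)^5 + (8)*(B 1)*(Γ 0)^2*(Γ 1)^3 + (4)*(B 1)*(Γ 0)^4*(Γ 1) + (8)*(B 1)^2*(Γ 0)^2*(Γ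 1)^2 + (8)*(B 1)^2*(Γ 0)^4 + (-8)*(B 1)^3*(Γ 1)^3 + (-8)*(B 1)^3*(Γ 0)^2*(Γ 1) + (8)*(B 1)^4*(Γ 0)^2 + (4)*(B 1)^5*(Γ 1) + (4)*(B 0)*(Γ 0)*(Γ 1)^4 + (8)*(B 0)*(Γ 0)^3*(Γ 1)^2 + (4)*(B 0)*(Γ 0)^5 + (-16)*(B 0)*(B 1)*(Γ 0)*(Γ 1)^3 + (-16)*(B 0)*(B 1)*(Γ 0)^3*(Γ 1) + (-8)*(B 0)*(B 1)^2*(Γ 0)*(Γ 1)^2 + (-8)*(B 0)*(B 1)^2*(Γ 0)^3 + (-16)*(B 0)*(B 1)^3*(Γ 0)*(Γ 1) + (4)*(B 0)*(B 1)^4*(Γ 0) + (8)*(B 0)^2*(Γ 1)^4 + (8)*(B 0)^2*(Γ 0)^2*(Γ 1)^2 + (-8)*(B 0)^2*(B 1)*(Γ 1)^3 + (-8)*(B 0)^2*(B 1)*(Γ 0)^2*(Γ 1) + (8)*(B 0)^2*(B 1)^2*(Γ 1)^2 + (8)*(B 0)^2*(B 1)^2*(Γ 0)^2 + (8)*(B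 0)^2*(B 1)^3*(Γ 1) + (-8)*(B 0)^3*(Γ 0)*(Γ 1)^2 + (-8)*(B 0)^3*(Γ 0)^3 + (-16)*(B 0)^3*(B 1)*(Γ 0)*(Γ 1) + (8)*(B 0)^3*(B 1)^2*(Γ 0) + (8)*(B 0)^4*(Γ 1)^2 + (4)*(B 0)^4*(B 1)*(Γ 1) + (4)*(B 0)^5*(Γ 0) + (-4)*(A 1)*(Γ 1)^5 + (-8)*(A 1)*(Γ 0)^2*(Γ 1)^3 + (-4)*(A 1)*(Γ 0)^4*(Γ 1) + (-20)*(A 1)*(B 1)*(Γ 1)^4 + (-40)*(A 1)*(B 1)*(Γ 0)^2*(Γ 1)^2 + (-20)*(A 1)*(B 1)*(Γ 0)^4 + (24)*(A 1)*(B 1)^2*(Γ 1)^3 + (8)*(A 1)*(B 1)^2*(Γ 0)^2*(Γ 1) + (24)*(A 1)*(B 1)^3*(Γ 1)^2 + (-24)*(A 1)*(B 1)^3*(Γ 0)^2 + (-20)*(A 1)*(B 1)^4*(Γ 1) + (-4)*(A 1)*(B 1)^5 + (64)*(A 1)*(B 0)*(B 1)*(Γ 0)*(Γ 1)^2 + (32)*(A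 1)*(B 0)*(B 1)*(Γ 0)^3 + (64)*(A 1)*(B 0)*(B 1)^2*(Γ 0)*(Γ 1) + (-24)*(A 1)*(B 0)^2*(Γ 1)^3 + (-8)*(A 1)*(B 0)^2*(Γ 0)^2*(Γ 1) + (8)*(A 1)*(B 0)^2*(B 1)*(Γ 1)^2 + (-8)*(A 1)*(B 0)^2*(B 1)*(Γ 0)^2 + (-40)*(A 1)*(B 0)^2*(B 1)^2*(Γ 1) + (-8)*(A 1)*(B 0)^2*(B 1)^3 + (32)*(A 1)*(B 0)^3*(Γ 0)*(Γ 1) + (-20)*(A 1)*(B 0)^4*(Γ 1) + (-4)*(A 1)*(B 0)^4*(B 1) + (20)*(A 1)^2*(Γ 1)^4 + (32)*(A 1)^2*(Γ 0)^2*(Γ 1)^2 + (12)*(A 1)^2*(Γ 0)^4 + (16)*(A 1)^2*(B 1)*(Γ 1)^3 + (32)*(A 1)^2*(B 1)*(Γ 0)^2*(Γ 1) + (-72)*(A 1)^2*(B 1)^2*(Γ 1)^2 + (32)*(A 1)^2*(B 1)^2*(Γ 0)^2 + (16)*(A 1)^2*(B 1)^3*(Γ 1) + (20)*(A 1)^2*(B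 1)^4 + (-32)*(A 1)^2*(B 0)*(Γ 0)*(Γ 1)^2 + (-16)*(A 1)^2*(B 0)*(Γ 0)^3 + (-128)*(A 1)^2*(B 0)*(B 1)*(Γ 0)*(Γ 1) + (-32)*(A 1)^2*(B 0)*(B 1)^2*(Γ 0) + (32)*(A 1)^2*(B 0)^2*(Γ 1)^2 + (8)*(A 1)^2*(B 0)^2*(Γ 0)^2 + (32)*(A 1)^2*(B 0)^2*(B 1)*(Γ 1) + (32)*(A 1)^2*(B 0)^2*(B 1)^2 + (-16)*(A 1)^2*(B 0)^3*(Γ 0) + (12)*(A 1)^2*(B 0)^4 + (-32)*(A 1)^3*(Γ 1)^3 + (-32)*(A 1)^3*(Γ 0)^2*(Γ 1) + (32)*(A 1)^3*(B 1)*(Γ 1)^2 + (-32)*(A 1)^3*(B 1)*(Γ 0)^2 + (32)*(A 1)^3*(B 1)^2*(Γ 1) + (-32)*(A 1)^3*(B 1)^3 + (64)*(A 1)^3*(B 0)*(Γ 0)*(Γ 1) + (64)*(A 1)^3*(B 0)*(B 1)*(Γ 0) + (-32)*(A 1)^3*(B 0)^2*(Γ 1) + (-32)*(A 1)^3*(B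 0)^2*(B 1) + (16)*(A 1)^4*(Γ 1)^2 + (16)*(A 1)^4*(Γ 0)^2 + (-32)*(A 1)^4*(B 1)*(Γ 1) + (16)*(A 1)^4*(B 1)^2 + (-32)*(A 1)^4*(B 0)*(Γ 0) + (16)*(A 1)^4*(B 0)^2 + (-4)*(A 0)*(Γ 0)*(Γ 1)^4 + (-8)*(A 0)*(Γ 0)^3*(Γ 1)^2 + (-4)*(A 0)*(Γ 0)^5 + (-8)*(A 0)*(B 1)^2*(Γ 0)*(Γ 1)^2 + (-24)*(A 0)*(B 1)^2*(Γ 0)^3 + (32)*(A 0)*(B 1)^3*(Γ 0)*(Γ 1) + (-20)*(A 0)*(B 1)^4*(Γ 0) + (-20)*(A 0)*(B 0)*(Γ 1)^4 + (-40)*(A 0)*(B 0)*(Γ 0)^2*(Γ 1)^2 + (-20)*(A 0)*(B 0)*(Γ 0)^4 + (32)*(A 0)*(B 0)*(B 1)*(Γ 1)^3 + (64)*(A 0)*(B 0)*(B 1)*(Γ 0)^2*(Γ 1) + (-8)*(A 0)*(B 0)*(B 1)^2*(Γ 1)^2 + (8)*(A 0)*(B 0)*(B 1)^2*(Γ 0)^2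 + (-4)*(A 0)*(B 0)*(B 1)^4 + (8)*(A 0)*(B 0)^2*(Γ 0)*(Γ 1)^2 + (24)*(A 0)*(B 0)^2*(Γ 0)^3 + (64)*(A 0)*(B 0)^2*(B 1)*(Γ 0)*(Γ 1) + (-40)*(A 0)*(B 0)^2*(B 1)^2*(Γ 0) + (-24)*(A 0)*(B 0)^3*(Γ 1)^2 + (24)*(A 0)*(B 0)^3*(Γ 0)^2 + (-8)*(A 0)*(B 0)^3*(B 1)^2 + (-20)*(A 0)*(B 0)^4*(Γ 0) + (-4)*(A 0)*(B 0)^5 + (16)*(A 0)*(A 1)*(Γ 0)*(Γ 1)^3 + (16)*(A 0)*(A 1)*(Γ 0)^3*(Γ 1) + (16)*(A 0)*(A 1)*(B 1)*(Γ 0)*(Γ 1)^2 + (48)*(A 0)*(A 1)*(B 1)*(Γ 0)^3 + (-80)*(A 0)*(A 1)*(B 1)^2*(Γ 0)*(Γ 1) + (48)*(A 0)*(A 1)*(B 1)^3*(Γ 0) + (48)*(A 0)*(A 1)*(B 0)*(Γ 1)^3 + (16)*(A 0)*(A 1)*(B 0)*(Γ 0)^2*(Γ 1) + (-80)*(A 0)*(A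 1)*(B 0)*(B 1)*(Γ 1)^2 + (-80)*(A 0)*(A 1)*(B 0)*(B 1)*(Γ 0)^2 + (16)*(A 0)*(A 1)*(B 0)*(B 1)^2*(Γ 1) + (16)*(A 0)*(A 1)*(B 0)*(B 1)^3 + (-80)*(A 0)*(A 1)*(B 0)^2*(Γ 0)*(Γ 1) + (16)*(A 0)*(A 1)*(B 0)^2*(B 1)*(Γ 0) + (48)*(A 0)*(A 1)*(B 0)^3*(Γ 1) + (16)*(A 0)*(A 1)*(B 0)^3*(B 1) + (-32)*(A 0)*(A 1)^2*(Γ 0)*(Γ 1)^2 + (-32)*(A 0)*(A 1)^2*(Γ 0)^3 + (64)*(A 0)*(A 1)^2*(B 1)*(Γ 0)*(Γ 1) + (-32)*(A 0)*(A 1)^2*(B 1)^2*(Γ 0) + (-32)*(A 0)*(A 1)^2*(B 0)*(Γ 1)^2 + (32)*(A 0)*(A 1)^2*(B 0)*(Γ 0)^2 + (64)*(A 0)*(A 1)^2*(B 0)*(B 1)*(Γ 1) + (-32)*(A 0)*(A 1)^2*(B 0)*(B 1)^2 + (32)*(A 0)*(A 1)^2*(B 0)^2*(Γ 0) + (-32)*(A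 0)*(A 1)^2*(B 0)^3 + (12)*(A 0)^2*(Γ 1)^4 + (32)*(A 0)^2*(Γ 0)^2*(Γ 1)^2 + (20)*(A 0)^2*(Γ 0)^4 + (-16)*(A 0)^2*(B 1)*(Γ 1)^3 + (-32)*(A 0)^2*(B 1)*(Γ 0)^2*(Γ 1) + (8)*(A 0)^2*(B 1)^2*(Γ 1)^2 + (32)*(A 0)^2*(B 1)^2*(Γ 0)^2 + (-16)*(A 0)^2*(B 1)^3*(Γ 1) + (12)*(A 0)^2*(B 1)^4 + (32)*(A 0)^2*(B 0)*(Γ 0)*(Γ 1)^2 + (16)*(A 0)^2*(B 0)*(Γ 0)^3 + (-128)*(A 0)^2*(B 0)*(B 1)*(Γ 0)*(Γ 1) + (32)*(A 0)^2*(B 0)*(B 1)^2*(Γ 0) + (32)*(A 0)^2*(B 0)^2*(Γ 1)^2 + (-72)*(A 0)^2*(B 0)^2*(Γ 0)^2 + (-32)*(A 0)^2*(B 0)^2*(B 1)*(Γ 1) + (32)*(A 0)^2*(B 0)^2*(B 1)^2 + (16)*(A 0)^2*(B 0)^3*(Γ 0) + (20)*(A 0)^2*(B 0)^4 + (-32)*(A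 0)^2*(A 1)*(Γ 1)^3 + (-32)*(A 0)^2*(A 1)*(Γ 0)^2*(Γ 1) + (32)*(A 0)^2*(A 1)*(B 1)*(Γ 1)^2 + (-32)*(A 0)^2*(A 1)*(B 1)*(Γ 0)^2 + (32)*(A 0)^2*(A 1)*(B 1)^2*(Γ 1) + (-32)*(A 0)^2*(A 1)*(B 1)^3 + (64)*(A 0)^2*(A 1)*(B 0)*(Γ 0)*(Γ 1) + (64)*(A 0)^2*(A 1)*(B 0)*(B 1)*(Γ 0) + (-32)*(A 0)^2*(A 1)*(B 0)^2*(Γ 1) + (-32)*(A 0)^2*(A 1)*(B 0)^2*(B 1) + (32)*(A 0)^2*(A 1)^2*(Γ 1)^2 + (32)*(A 0)^2*(A 1)^2*(Γ 0)^2 + (-64)*(A 0)^2*(A 1)^2*(B 1)*(Γ 1) + (32)*(A 0)^2*(A 1)^2*(B 1)^2 + (-64)*(A 0)^2*(A 1)^2*(B 0)*(Γ 0) + (32)*(A 0)^2*(A 1)^2*(B 0)^2 + (-32)*(A 0)^3*(Γ 0)*(Γ 1)^2 + (-32)*(A 0)^3*(Γ 0)^3 + (64)*(A 0)^3*(B 1)*(Γ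 0)*(Γ 1) + (-32)*(A 0)^3*(B 1)^2*(Γ 0) + (-32)*(A 0)^3*(B 0)*(Γ 1)^2 + (32)*(A 0)^3*(B 0)*(Γ 0)^2 + (64)*(A 0)^3*(B 0)*(B 1)*(Γ 1) + (-32)*(A 0)^3*(B 0)*(B 1)^2 + (32)*(A 0)^3*(B 0)^2*(Γ 0) + (-32)*(A 0)^3*(B 0)^3 + (16)*(A 0)^4*(Γ 1)^2 + (16)*(A 0)^4*(Γ 0)^2 + (-32)*(A 0)^4*(B 1)*(Γ 1) + (16)*(A 0)^4*(B 1)^2 + (-32)*(A 0)^4*(B 0)*(Γ 0) + (16)*(A 0)^4*(B 0)^2)*hk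
    exact mul_left_cancel₀ h4d2ne key
  have hpy : ((Γ 0 - B 0)^2 + (Γ 1 - B 1)^2) = ((B 0 - A 0)^2 + (B 1 - A 1)^2) + ((Γ 0 - A 0)^2 + (Γ 1 - A 1)^2) := by linear_combination (-2)*hk
  have hu0 : M₂ 0 - M₁ 0 = (Γ 0 - B 0)/2 := by linear_combination hm20 - hm10
  have hu1 : M₂ 1 - M₁ 1 = (Γ 1 - B 1)/2 := by linear_combination hm21 - hm11
  have hcpos : 0 < ((Γ 0 - A 0)^2 + (Γ 1 - A 1)^2) / ((B 0 - A 0)^2 + (B 1 - A 1)^2) := div_pos hngpos hnbpos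
  have huv : inner ℝ (M₂ - M₁) (O₁ - M₁) = (0:ℝ) := by
    rw [PiLp.inner_apply, Fin.sum_univ_two]
    simp only [RCLike.inner_apply, conj_trivial, PiLp.sub_apply]
    linear_combination (O₁ 0 - M₁ 0)*hu0 + (O₁ 1 - M₁ 1)*hu1 + (1/2)*F1
  have e₁ : M₁ + (O₁ - M₁) = O₁ := by abel
  have e₂ : M₁ + (M₂ - M₁) = M₂ := by abel
  have e₃ : M₁ + (M₂ - M₁) + (((Γ 0 - A 0)^2 + (Γ 1 - A 1)^2) / ((B 0 - A 0)^2 + (B 1 - A 1)^2)) • (O₁ - M₁) = O₂ := by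
    ext i
    fin_cases i
    · show _ = O₂ 0
      simp only [Fin.zero_eta, Fin.mk_one, PiLp.add_apply, PiLp.sub_apply, PiLp.smul_apply,
        smul_eq_mul]
      rw [div_mul_eq_mul_div, add_div' _ _ _ (ne_of_gt hnbpos), div_eq_iff (ne_of_gt hnbpos)]
      linear_combination F2a
    · show _ = O₂ 1
      simp only [Fin.zero_eta, Fin.mk_one, PiLp.add_apply, PiLp.sub_apply, PiLp.smul_apply,
        smul_eq_mul]
      rw [div_mul_eq_mul_div, add_div' _ _ _ (ne_of_gt hnbpos), div_eq_iff (ne_of_gt hnbpos)]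
      linear_combination F2b
  have hset : ({O₁, O₂, M₂, M₁} : Set (EuclideanSpace ℝ (Fin 2)))
      = {M₁ + (O₁ - M₁), M₁ + (M₂ - M₁) + (((Γ 0 - A 0)^2 + (Γ 1 - A 1)^2) / ((B 0 - A 0)^2 + (B 1 - A 1)^2)) • (O₁ - M₁), M₁ + (M₂ - M₁), M₁} := by
    rw [e₁, e₃, e₂]
  rw [hset, quad_vol M₁ (M₂ - M₁) (O₁ - M₁) (((Γ 0 - A 0)^2 + (Γ 1 - A 1)^2) / ((B 0 - A 0)^2 + (B 1 - A 1)^2)) hcpos huv,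
    ENNReal.toReal_ofReal (by positivity)]
  have hnu : ‖M₂ - M₁‖ = dist B Γ / 2 := by
    apply eq_of_sq_eq (norm_nonneg _) (by positivity)
    rw [norm_sq, div_pow, hna]
    simp only [PiLp.sub_apply]
    linear_combination (M₂ 0 - M₁ 0 + (Γ 0 - B 0)/2)*hu0 + (M₂ 1 - M₁ 1 + (Γ 1 - B 1)/2)*hu1
  have hnv : ‖O₁ - M₁‖ = dist A B * dist B Γ / (4 * dist A Γ) := by
    apply eq_of_sq_eq (norm_nonneg _) (by positivity)
    rw [norm_sq]
    simp only [PiLp.sub_apply]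
    rw [div_pow, mul_pow, hnb, hna, mul_pow, hng]
    rw [eq_div_iff (by positivity)]
    linear_combination F3
  have hpyth : dist B Γ ^ 2 = dist A B ^ 2 + dist A Γ ^ 2 := by
    linear_combination hna - hnb - hng - 2*hk
  rw [hnu, hnv, ← hng, ← hnb]
  rw [show (dist B Γ)^4 = ((dist A B)^2 + (dist A Γ)^2) * (dist B Γ)^2 by
    linear_combination (dist B Γ)^2 * hpyth]
  field_simp
  ring
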